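/- Define the path kernel k_p recursively on pairs of finite sequences over Σ by: k_p(s,t) = 0 if s or t is empty, and otherwise k_p(s,t) = k_Σ(s₁,t₁) + C_hv·k_p(s_{2:},t) + C_hv·k_p(s,t_{2:}) + C_d·k_p(s_{2:},t_{2:}), where s_{2:} denotes the tail of s. Then k_p satisfies the closed form k_p(s,t) = ∑_{i=1}^{|s|} ∑_{j=1}^{|t|} k_Σ(sᵢ,tⱼ) · k_Γ(i,j), where k_Γ(i,j) = ∑_{d=0}^{min(i,j)−1} C_hv^{i+j−2−2d} C_d^d (i+j−2−d)!/((i−1−d)!(j−1−d)!d!). -/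

import Mathlib

/-- The Path kernel, defined recursively (Eq. 4). -/
noncomputable def pathKernel {A : Type*} (kA : A → A → ℝ) (Chv Cd : ℝ) :
    List A → List A → ℝ
  | [], _ => 0
  | _ :: _, [] => 0
  | a :: s, b :: t =>
      kA a b + Chv * pathKernel kA Chv Cd s (b :: t)
        + Chv * pathKernel kA Chv Cd (a :: s) t
        + Cd * pathKernel kA Chv Cd s t
termination_by x y => x.length + y.length
decreasing_by all_goals (simp [List.length]; try omega)

/-- The structure kernel `k_Γ` (Eq. 5). -/
noncomputable def kGamma (Chv Cd : ℝ) (i j : ℕ) : ℝ :=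
  ∑ d ∈ Finset.range (min i j),
    Chv ^ (i + j - 2 - 2 * d) * Cd ^ d *
      ((Nat.factorial (i + j - 2 - d) : ℝ) /
        ((Nat.factorial (i - 1 - d) : ℝ) * (Nat.factorial (j - 1 - d) : ℝ) *
          (Nat.factorial d : ℝ)))

noncomputable def fterm (Chv Cd : ℝ) (a b d : ℕ) : ℝ :=
  if d ≤ a ∧ d ≤ b then
    Chv ^ (a + b - 2 * d) * Cd ^ d *
      ((Nat.factorial (a + b - d) : ℝ) /
        ((Nat.factorial (a - d) : ℝ) * (Nat.factorial (b - d) : ℝ) *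
          (Nat.factorial d : ℝ)))
  else 0

lemma fterm_zero (Chv Cd : ℝ) (a b : ℕ) :
    fterm Chv Cd (a+1) (b+1) 0 =
      Chv * fterm Chv Cd a (b+1) 0 + Chv * fterm Chv Cd (a+1) b 0 := by
  rw [fterm, if_pos (by omega), fterm, if_pos (by omega), fterm, if_pos (by omega)]
  have e1 : a + 1 + (b + 1) - 2 * 0 = a + b + 2 := by omega
  have e2 : a + 1 + (b + 1) - 0 = a + b + 2 := by omega
  have e3 : a + 1 - 0 = a + 1 := by omega
  have e4 : b + 1 - 0 = b + 1 := by omega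
  have e5 : a + (b + 1) - 2 * 0 = a + b + 1 := by omega
  have e6 : a + (b + 1) - 0 = a + b + 1 := by omega
  have e7 : a - 0 = a := by omega
  have e8 : b - 0 = b := by omega
  have e9 : a + 1 + b - 2 * 0 = a + b + 1 := by omega
  have e10 : a + 1 + b - 0 = a + b + 1 := by omega
  simp only [e1, e2, e3, e4, e5, e6, e7, e8, e9, e10]
  have fa := Nat.cast_pos (α := ℝ) |>.2 a.factorial_pos
  have fb := Nat.cast_pos (α := ℝ) |>.2 b.factorial_pos
  rw [show a+b+2 = (a+b+1)+1 by ring, Nat.factorial_succ (a+b+1), Nat.factorial_succ a,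
    Nat.factorial_succ b, Nat.factorial_zero, pow_succ Chv]
  push_cast
  field_simp
  ring

lemma fterm_succ (Chv Cd : ℝ) (a b d : ℕ) :
    fterm Chv Cd (a+1) (b+1) (d+1) =
      Chv * fterm Chv Cd a (b+1) (d+1) + Chv * fterm Chv Cd (a+1) b (d+1)
        + Cd * fterm Chv Cd a b d := by
  by_cases h : d ≤ a ∧ d ≤ b
  · obtain ⟨hda, hdb⟩ := h
    obtain ⟨p, rfl⟩ := Nat.exists_eq_add_of_le hda
    obtain ⟨q, rfl⟩ := Nat.exists_eq_add_of_le hdb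
    have fd := Nat.cast_pos (α := ℝ) |>.2 d.factorial_pos
    rcases p with _ | p <;> rcases q with _ | q
    · -- p = 0, q = 0
      rw [fterm, if_pos (by omega), fterm, if_neg (by omega), fterm, if_neg (by omega),
        fterm, if_pos (by omega)]
      have e1 : d + 0 + 1 + (d + 0 + 1) - 2 * (d+1) = 0 := by omega
      have e2 : d + 0 + 1 + (d + 0 + 1) - (d+1) = d + 1 := by omega
      have e3 : d + 0 + 1 - (d+1) = 0 := by omega
      have e4 : d + 0 + (d + 0) - 2 * d = 0 := by omega
      have e5 : d + 0 + (d + 0) - d = d := by omega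
      have e6 : d + 0 - d = 0 := by omega
      simp only [e1, e2, e3, e4, e5, e6]
      simp [Nat.factorial_succ, pow_succ]
      field_simp
    · -- p = 0, q ≥ 1
      rw [fterm, if_pos (by omega), fterm, if_neg (by omega), fterm, if_pos (by omega),
        fterm, if_pos (by omega)]
      have e1 : d + 0 + 1 + (d + (q+1) + 1) - 2 * (d+1) = q + 1 := by omega
      have e2 : d + 0 + 1 + (d + (q+1) + 1) - (d+1) = d + q + 2 := by omega
      have e3 : d + 0 + 1 - (d+1) = 0 := by omega
      have e4 : d + (q+1) + 1 - (d+1) = q + 1 := by omega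
      have e5 : d + 0 + 1 + (d + (q+1)) - 2 * (d+1) = q := by omega
      have e6 : d + 0 + 1 + (d + (q+1)) - (d+1) = d + q + 1 := by omega
      have e7 : d + (q+1) - (d+1) = q := by omega
      have e8 : d + 0 + (d + (q+1)) - 2 * d = q + 1 := by omega
      have e9 : d + 0 + (d + (q+1)) - d = d + q + 1 := by omega
      have e10 : d + 0 - d = 0 := by omega
      have e11 : d + (q+1) - d = q + 1 := by omega
      simp only [e1, e2, e3, e4, e5, e6, e7, e8, e9, e10, e11]
      have fq := Nat.cast_pos (α := ℝ) |>.2 q.factorial_pos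
      have fdq := Nat.cast_pos (α := ℝ) |>.2 (d+q+1).factorial_pos
      rw [show d+q+2 = (d+q+1)+1 by ring, Nat.factorial_succ, Nat.factorial_succ q,
        Nat.factorial_succ d, Nat.factorial_zero, pow_succ Cd]
      push_cast
      field_simp
      ring
    · -- p ≥ 1, q = 0
      rw [fterm, if_pos (by omega), fterm, if_pos (by omega), fterm, if_neg (by omega),
        fterm, if_pos (by omega)]
      have e1 : d + (p+1) + 1 + (d + 0 + 1) - 2 * (d+1) = p + 1 := by omega
      have e2 : d + (p+1) + 1 + (d + 0 + 1) - (d+1) = d + p + 2 := by omega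
      have e3 : d + (p+1) + 1 - (d+1) = p + 1 := by omega
      have e4 : d + 0 + 1 - (d+1) = 0 := by omega
      have e5 : d + (p+1) + (d + 0 + 1) - 2 * (d+1) = p := by omega
      have e6 : d + (p+1) + (d + 0 + 1) - (d+1) = d + p + 1 := by omega
      have e7 : d + (p+1) - (d+1) = p := by omega
      have e8 : d + (p+1) + (d + 0) - 2 * d = p + 1 := by omega
      have e9 : d + (p+1) + (d + 0) - d = d + p + 1 := by omega
      have e10 : d + (p+1) - d = p + 1 := by omega
      have e11 : d + 0 - d = 0 := by omega
      simp only [e1, e2, e3, e4, e5, e6, e7, e8, e9, e10, e11]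
      have fp := Nat.cast_pos (α := ℝ) |>.2 p.factorial_pos
      have fdp := Nat.cast_pos (α := ℝ) |>.2 (d+p+1).factorial_pos
      rw [show d+p+2 = (d+p+1)+1 by ring, Nat.factorial_succ, Nat.factorial_succ p,
        Nat.factorial_succ d, Nat.factorial_zero, pow_succ Cd]
      push_cast
      field_simp
      ring
    · -- p ≥ 1, q ≥ 1
      rw [fterm, if_pos (by omega), fterm, if_pos (by omega), fterm, if_pos (by omega),
        fterm, if_pos (by omega)]
      have e1 : d + (p+1) + 1 + (d + (q+1) + 1) - 2 * (d+1) = p + q + 2 := by omega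
      have e2 : d + (p+1) + 1 + (d + (q+1) + 1) - (d+1) = d + p + q + 3 := by omega
      have e3 : d + (p+1) + 1 - (d+1) = p + 1 := by omega
      have e4 : d + (q+1) + 1 - (d+1) = q + 1 := by omega
      have e5 : d + (p+1) + (d + (q+1) + 1) - 2 * (d+1) = p + q + 1 := by omega
      have e6 : d + (p+1) + (d + (q+1) + 1) - (d+1) = d + p + q + 2 := by omega
      have e7 : d + (p+1) - (d+1) = p := by omega
      have e8 : d + (p+1) + 1 + (d + (q+1)) - 2 * (d+1) = p + q + 1 := by omega
      have e9 : d + (p+1) + 1 + (d + (q+1)) - (d+1) = d + p + q + 2 := by omega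
      have e10 : d + (q+1) - (d+1) = q := by omega
      have e11 : d + (p+1) + (d + (q+1)) - 2 * d = p + q + 2 := by omega
      have e12 : d + (p+1) + (d + (q+1)) - d = d + p + q + 2 := by omega
      have e13 : d + (p+1) - d = p + 1 := by omega
      have e14 : d + (q+1) - d = q + 1 := by omega
      simp only [e1, e2, e3, e4, e5, e6, e7, e8, e9, e10, e11, e12, e13, e14]
      have fp := Nat.cast_pos (α := ℝ) |>.2 p.factorial_pos
      have fq := Nat.cast_pos (α := ℝ) |>.2 q.factorial_pos
      have fdpq := Nat.cast_pos (α := ℝ) |>.2 (d+p+q+2).factorial_pos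
      rw [show d+p+q+3 = (d+p+q+2)+1 by ring, Nat.factorial_succ (d+p+q+2),
        Nat.factorial_succ p, Nat.factorial_succ q, Nat.factorial_succ d, pow_succ Cd]
      push_cast
      field_simp
      ring
  · rw [fterm, if_neg (by omega), fterm, if_neg (by omega), fterm, if_neg (by omega),
      fterm, if_neg (by omega)]
    ring

lemma kGamma_eq_sum (Chv Cd : ℝ) (a b N : ℕ) (h : min a b < N) :
    kGamma Chv Cd (a + 1) (b + 1) = ∑ d ∈ Finset.range N, fterm Chv Cd a b d := by
  rw [kGamma]
  have hmin : min (a+1) (b+1) = min a b + 1 := by omega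
  rw [hmin]
  rw [← Finset.sum_subset (Finset.range_subset_range.2 h)]
  · apply Finset.sum_congr rfl
    intro d hd
    simp only [Finset.mem_range] at hd
    have hda : d ≤ a := le_trans (Nat.lt_succ_iff.1 hd) (min_le_left a b)
    have hdb : d ≤ b := le_trans (Nat.lt_succ_iff.1 hd) (min_le_right a b)
    rw [fterm, if_pos ⟨hda, hdb⟩]
    have e1 : a + 1 + (b + 1) - 2 - 2 * d = a + b - 2 * d := by omega
    have e2 : a + 1 + (b + 1) - 2 - d = a + b - d := by omega
    have e3 : a + 1 - 1 - d = a - d := by omega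
    have e4 : b + 1 - 1 - d = b - d := by omega
    rw [e1, e2, e3, e4]
  · intro d _ hd
    simp only [Finset.mem_range] at hd
    rw [fterm, if_neg]
    omega

lemma kGamma_one (Chv Cd : ℝ) (n : ℕ) : kGamma Chv Cd 1 (n + 1) = Chv ^ n := by
  have h : min 1 (n+1) = 1 := by omega
  rw [kGamma, h]
  have e1 : 1 + (n + 1) - 2 = n := by omega
  simp [e1, Nat.factorial]
  rw [div_self (Nat.cast_ne_zero.mpr n.factorial_pos.ne'), mul_one]

lemma kGamma_one' (Chv Cd : ℝ) (n : ℕ) : kGamma Chv Cd (n + 1) 1 = Chv ^ n := by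
  have h : min (n+1) 1 = 1 := by omega
  rw [kGamma, h]
  have e1 : n + 1 + 1 - 2 = n := by omega
  simp [e1, Nat.factorial]
  rw [div_self (Nat.cast_ne_zero.mpr n.factorial_pos.ne'), mul_one]

lemma kGamma_rec (Chv Cd : ℝ) (a b : ℕ) :
    kGamma Chv Cd (a+1+1) (b+1+1) =
      Chv * kGamma Chv Cd (a+1) (b+1+1) + Chv * kGamma Chv Cd (a+1+1) (b+1)
        + Cd * kGamma Chv Cd (a+1) (b+1) := by
  set M := a + b + 2 with hM
  rw [kGamma_eq_sum Chv Cd (a+1) (b+1) (M+1) (by omega),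
      kGamma_eq_sum Chv Cd a (b+1) (M+1) (by omega),
      kGamma_eq_sum Chv Cd (a+1) b (M+1) (by omega),
      kGamma_eq_sum Chv Cd a b M (by omega)]
  rw [Finset.sum_range_succ' (fterm Chv Cd (a+1) (b+1)) M,
      Finset.sum_range_succ' (fterm Chv Cd a (b+1)) M,
      Finset.sum_range_succ' (fterm Chv Cd (a+1) b) M]
  simp only [fterm_succ, fterm_zero, Finset.sum_add_distrib, mul_add, Finset.mul_sum]
  ring

lemma kGamma_one_one (Chv Cd : ℝ) : kGamma Chv Cd 1 1 = 1 := by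
  simpa using kGamma_one Chv Cd 0

lemma kGamma_one_rec (Chv Cd : ℝ) (n : ℕ) :
    kGamma Chv Cd 1 (n+1+1) = Chv * kGamma Chv Cd 1 (n+1) := by
  rw [kGamma_one, kGamma_one, pow_succ, mul_comm]

lemma kGamma_one_rec' (Chv Cd : ℝ) (n : ℕ) :
    kGamma Chv Cd (n+1+1) 1 = Chv * kGamma Chv Cd (n+1) 1 := by
  rw [kGamma_one', kGamma_one', pow_succ, mul_comm]

/-- Equivalence of the recursive Path kernel (Eq. 4) with the decomposed
closed form (Eq. 5). -/
theorem pathKernel_eq_closed_form {A : Type*} (kA : A → A → ℝ) (Chv Cd : ℝ)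
    (s t : List A) :
    pathKernel kA Chv Cd s t =
      ∑ i : Fin s.length, ∑ j : Fin t.length,
        kA (s.get i) (t.get j) * kGamma Chv Cd ((i : ℕ) + 1) ((j : ℕ) + 1) := by
  induction s, t using pathKernel.induct with
  | case1 t => rw [pathKernel]; simp
  | case2 a s => rw [pathKernel]; simp
  | case3 a s b t ih1 ih2 ih3 =>
    rw [pathKernel, ih1, ih2, ih3]
    simp only [List.length_cons, Fin.sum_univ_succ, List.get_cons_zero, Fin.val_zero,
      List.get_cons_succ', Fin.val_succ, Fin.isValue, zero_add]
    simp only [kGamma_one_one, kGamma_rec, kGamma_one_rec, kGamma_one_rec',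
      List.get_cons_succ', List.get_cons_zero,
      Finset.sum_add_distrib, Finset.mul_sum, mul_add, add_mul, mul_one]
    simp only [mul_left_comm]
    ring
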